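/- For the second-kind half-line quantum walk with coin parameters γ_j = 1/(r+j) (j ≥ 1) and off-diagonal coin at the origin: μ_n(j) = 0 whenever n + j is odd, and for each fixed j ∈ ℕ the limit along the even-parity subsequence satisfies lim_{m→∞} μ_{j+2m}(j) = (1/(r+1))² if j = 0, and lim_{m→∞} μ_{j+2m}(j) = 2r/((r+1)(r−1+j)(r+1+j)) if j ≥ 1. (Localization with power-law decay around the origin for the second-kind walk.) -/

import Mathlib

open Filter Topology Matrix

/-- Coin parameter `γ_j = 1/(r+j)`. -/
noncomputable def gam (r : ℝ) (j : ℕ) : ℝ := 1 / (r + j)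

/-- `ρ_j = √(1 - γ_j²)`. -/
noncomputable def rho (r : ℝ) (j : ℕ) : ℝ := Real.sqrt (1 - gam r j ^ 2)

/-- `P_j = [[ρ_j, γ_j], [0, 0]]` (used for `j ≥ 1`). -/
noncomputable def Pmat (r : ℝ) (j : ℕ) : Matrix (Fin 2) (Fin 2) ℂ :=
  !![(rho r j : ℂ), (gam r j : ℂ); 0, 0]

/-- `Q_j = [[0, 0], [−γ_j, ρ_j]]` for `j ≥ 1`, and the off-diagonal-coin value
`Q_0 = [[0, 0], [1, 0]]` at the origin. -/
noncomputable def Qmat (r : ℝ) : ℕ → Matrix (Fin 2) (Fin 2) ℂ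
  | 0 => !![0, 0; 1, 0]
  | j + 1 => !![0, 0; (-(gam r (j + 1)) : ℂ), (rho r (j + 1) : ℂ)]

/-- Weight matrices `Ξ_n(j)` of the second-kind half-line quantum walk with
coin parameters `γ_j = 1/(r+j)` (`j ≥ 1`) and off-diagonal coin at the origin. -/
noncomputable def Xi (r : ℝ) : ℕ → ℕ → Matrix (Fin 2) (Fin 2) ℂ
  | 0, 0 => 1
  | 0, _ + 1 => 0
  | n + 1, 0 => Pmat r 1 * Xi r n 1
  | n + 1, j + 1 => Pmat r (j + 2) * Xi r n (j + 2) + Qmat r j * Xi r n j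

/-- Position distribution `μ_n(j) = ‖Ξ_n(j) φ_0‖²` for the initial coin state
`φ_0 = (1, 0)` (squared Euclidean norm of `ℂ²`). -/
noncomputable def mu (r : ℝ) (n j : ℕ) : ℝ :=
  ‖(Xi r n j).mulVec ![1, 0] 0‖ ^ 2
    + ‖(Xi r n j).mulVec ![1, 0] 1‖ ^ 2

/-! ### Auxiliary closed-form description of the walk -/

/-- Stationary amplitude `a_j = √(r/((r+1)(r+j)(r+j+1)))`. -/
noncomputable def avA (r : ℝ) (j : ℕ) : ℝ :=
  Real.sqrt (r / ((r + 1) * (r + j) * (r + j + 1)))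

/-- `π_j = ∏_{i=1}^j ρ_i = √(r(r+j+1)/((r+1)(r+j)))`. -/
noncomputable def ppi (r : ℝ) (j : ℕ) : ℝ :=
  Real.sqrt (r * (r + j + 1) / ((r + 1) * (r + j)))

/-- Stationary vector `w(j)`. -/
noncomputable def Wv (r : ℝ) : ℕ → Fin 2 → ℂ
  | 0 => ![((avA r 0 : ℝ) : ℂ), 0]
  | j + 1 => ![((avA r (j + 1) : ℝ) : ℂ), ((avA r j : ℝ) : ℂ)]

/-- Edge vector `e(j)`. -/
noncomputable def Ev (r : ℝ) : ℕ → Fin 2 → ℂ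
  | 0 => ![1, 0]
  | j + 1 => ![0, ((ppi r j : ℝ) : ℂ)]

/-- Closed form of `Ξ_n(j) φ_0`. -/
noncomputable def Vv (r : ℝ) (n j : ℕ) : Fin 2 → ℂ :=
  if j > n then 0 else if (n + j) % 2 = 1 then 0 else if n = j then Ev r j else Wv r j

lemma Vv_lt {r : ℝ} {n j : ℕ} (h : n < j) : Vv r n j = 0 := if_pos h

lemma Vv_odd {r : ℝ} {n j : ℕ} (h : (n + j) % 2 = 1) : Vv r n j = 0 := by
  unfold Vv
  rcases Nat.lt_or_ge n j with h1 | h1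
  · rw [if_pos h1]
  · rw [if_neg (by omega), if_pos h]

lemma Vv_diag {r : ℝ} {n j : ℕ} (h : n = j) : Vv r n j = Ev r j := by
  unfold Vv
  rw [if_neg (by omega), if_neg (by omega), if_pos h]

lemma Vv_W {r : ℝ} {n j : ℕ} (h1 : j < n) (h2 : (n + j) % 2 = 0) : Vv r n j = Wv r j := by
  unfold Vv
  rw [if_neg (by omega), if_neg (by omega), if_neg (by omega)]

lemma mulVec2 (a b c d x y : ℂ) :
    (!![a, b; c, d]).mulVec ![x, y] = ![a * x + b * y, c * x + d * y] := by
  funext i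
  fin_cases i <;>
    simp [Matrix.mulVec, dotProduct, Fin.sum_univ_two]

lemma P_mulVec (r : ℝ) (k : ℕ) (x y : ℂ) :
    (Pmat r k).mulVec ![x, y] = ![(rho r k : ℝ) * x + (gam r k : ℝ) * y, 0] := by
  rw [Pmat, mulVec2]
  norm_num

lemma Q0_mulVec (r : ℝ) (x y : ℂ) : (Qmat r 0).mulVec ![x, y] = ![0, x] := by
  show (!![0, 0; 1, 0] : Matrix (Fin 2) (Fin 2) ℂ).mulVec ![x, y] = ![0, x]
  rw [mulVec2]
  norm_num

lemma Qs_mulVec (r : ℝ) (k : ℕ) (x y : ℂ) :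
    (Qmat r (k + 1)).mulVec ![x, y]
      = ![0, -(((gam r (k + 1) : ℝ)) : ℂ) * x + ((rho r (k + 1) : ℝ) : ℂ) * y] := by
  simp only [Qmat]
  rw [mulVec2]
  norm_num

section aux

variable {r : ℝ}

lemma sqrt_eq_of_sq {a b : ℝ} (ha : 0 ≤ a) (hb : 0 ≤ b) (h : a ^ 2 = b ^ 2) : a = b := by
  rw [← Real.sqrt_sq ha, ← Real.sqrt_sq hb, h]

lemma avA_nonneg (j : ℕ) : 0 ≤ avA r j := Real.sqrt_nonneg _

lemma ppi_nonneg (j : ℕ) : 0 ≤ ppi r j := Real.sqrt_nonneg _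

lemma rho_nonneg (j : ℕ) : 0 ≤ rho r j := Real.sqrt_nonneg _

variable (hr : 1 < r)
include hr

lemma rj_pos (j : ℕ) : (0 : ℝ) < r + j := by
  have : (0:ℝ) ≤ (j:ℝ) := j.cast_nonneg
  linarith

omit hr in
lemma gam_eq (j : ℕ) : gam r (j + 1) = 1 / (r + j + 1) := by
  rw [gam]
  push_cast
  ring_nf

lemma gam_nonneg (j : ℕ) : 0 ≤ gam r j := by
  have := rj_pos hr j
  rw [gam]
  positivity

lemma gam_lt_one (j : ℕ) : gam r j < 1 := by
  have h1 : (1:ℝ) < r + j := by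
    have : (0:ℝ) ≤ (j:ℝ) := j.cast_nonneg
    linarith
  rw [gam, div_lt_one (by linarith)]
  linarith

lemma one_sub_gam_sq_nonneg (j : ℕ) : 0 ≤ 1 - gam r j ^ 2 := by
  have h1 := gam_nonneg hr j
  have h2 := gam_lt_one hr j
  nlinarith

lemma rho_sq (j : ℕ) : rho r j ^ 2 = 1 - gam r j ^ 2 :=
  Real.sq_sqrt (one_sub_gam_sq_nonneg hr j)

lemma avA_arg_nonneg (j : ℕ) : 0 ≤ r / ((r + 1) * (r + j) * (r + j + 1)) := by
  have h1 := rj_pos hr j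
  have h2 : (0:ℝ) < r + 1 := by linarith
  have h3 : (0:ℝ) < r + j + 1 := by linarith
  have h4 : (0:ℝ) < r := by linarith
  positivity

lemma avA_sq (j : ℕ) : avA r j ^ 2 = r / ((r + 1) * (r + j) * (r + j + 1)) :=
  Real.sq_sqrt (avA_arg_nonneg hr j)

lemma ppi_arg_nonneg (j : ℕ) : 0 ≤ r * (r + j + 1) / ((r + 1) * (r + j)) := by
  have h1 := rj_pos hr j
  have h2 : (0:ℝ) < r + 1 := by linarith
  have h3 : (0:ℝ) < r + j + 1 := by linarith
  have h4 : (0:ℝ) < r := by linarith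
  positivity

lemma ppi_sq (j : ℕ) : ppi r j ^ 2 = r * (r + j + 1) / ((r + 1) * (r + j)) :=
  Real.sq_sqrt (ppi_arg_nonneg hr j)

omit hr in
lemma cast_succ (j : ℕ) : ((j + 1 : ℕ) : ℝ) = (j : ℝ) + 1 := by push_cast; ring

lemma facts (j : ℕ) :
    (0:ℝ) < r ∧ (0:ℝ) < r + 1 ∧ (0:ℝ) < r + j ∧ (0:ℝ) < r + j + 1 ∧ (0:ℝ) < r + j + 2 := by
  have h1 := rj_pos hr j
  refine ⟨by linarith, by linarith, h1, by linarith, by linarith⟩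

lemma L1 (j : ℕ) :
    rho r (j + 1) * avA r (j + 1) = (1 - gam r (j + 1)) * avA r j := by
  obtain ⟨h0, h1, h2, h3, h4⟩ := facts hr j
  have hg1 : 0 ≤ 1 - gam r (j + 1) := by linarith [gam_lt_one hr (j + 1)]
  apply sqrt_eq_of_sq (mul_nonneg (rho_nonneg _) (avA_nonneg _))
    (mul_nonneg hg1 (avA_nonneg _))
  rw [mul_pow, mul_pow, rho_sq hr, avA_sq hr, avA_sq hr, gam_eq, cast_succ]
  field_simp
  ring

lemma L2 (j : ℕ) :
    rho r (j + 1) * avA r j = (1 + gam r (j + 1)) * avA r (j + 1) := by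
  obtain ⟨h0, h1, h2, h3, h4⟩ := facts hr j
  have hg1 : 0 ≤ 1 + gam r (j + 1) := by linarith [gam_nonneg hr (j + 1)]
  apply sqrt_eq_of_sq (mul_nonneg (rho_nonneg _) (avA_nonneg _))
    (mul_nonneg hg1 (avA_nonneg _))
  rw [mul_pow, mul_pow, rho_sq hr, avA_sq hr, avA_sq hr, gam_eq, cast_succ]
  field_simp
  ring

lemma L3 (j : ℕ) : rho r (j + 1) * ppi r j = ppi r (j + 1) := by
  obtain ⟨h0, h1, h2, h3, h4⟩ := facts hr j
  apply sqrt_eq_of_sq (mul_nonneg (rho_nonneg _) (ppi_nonneg _)) (ppi_nonneg _)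
  rw [mul_pow, rho_sq hr, ppi_sq hr, ppi_sq hr, gam_eq, cast_succ]
  field_simp
  ring

lemma L4 (j : ℕ) : gam r (j + 1) * ppi r j = avA r j := by
  obtain ⟨h0, h1, h2, h3, h4⟩ := facts hr j
  apply sqrt_eq_of_sq (mul_nonneg (gam_nonneg hr _) (ppi_nonneg _)) (avA_nonneg _)
  rw [mul_pow, ppi_sq hr, avA_sq hr, gam_eq]
  field_simp

lemma ppi_zero : ppi r 0 = 1 := by
  obtain ⟨h0, h1, h2, h3, h4⟩ := facts hr 0
  rw [ppi, show r * (r + (0:ℕ) + 1) / ((r + 1) * (r + (0:ℕ))) = 1 by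
    push_cast; field_simp; ring, Real.sqrt_one]

lemma xi_eq : ∀ n j, (Xi r n j).mulVec ![1, 0] = Vv r n j := by
  intro n
  induction n with
  | zero =>
    intro j
    cases j with
    | zero =>
      rw [show Xi r 0 0 = 1 from rfl, Matrix.one_mulVec, Vv_diag rfl]
      rfl
    | succ j =>
      rw [show Xi r 0 (j + 1) = 0 from rfl, Matrix.zero_mulVec, Vv_lt (by omega)]
  | succ n ih =>
    intro j
    cases j with
    | zero =>
      rw [show Xi r (n + 1) 0 = Pmat r 1 * Xi r n 1 from rfl, ← Matrix.mulVec_mulVec, ih 1]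
      rcases (by omega : n = 0 ∨ n = 1 ∨ (2 ≤ n ∧ n % 2 = 0) ∨ (3 ≤ n ∧ n % 2 = 1))
        with h | h | ⟨h, hp⟩ | ⟨h, hp⟩
      · subst h
        rw [Vv_lt (by omega), Vv_odd (by omega), Matrix.mulVec_zero]
      · subst h
        rw [Vv_diag rfl, Vv_W (by omega) (by omega)]
        show (Pmat r 1).mulVec ![0, ((ppi r 0 : ℝ) : ℂ)] = ![((avA r 0 : ℝ) : ℂ), 0]
        rw [P_mulVec]
        funext i
        fin_cases i <;> simp
        push_cast
        exact_mod_cast congrArg (fun x : ℝ => (x : ℂ)) (L4 hr 0)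
      · rw [Vv_odd (by omega), Vv_odd (by omega), Matrix.mulVec_zero]
      · rw [Vv_W (by omega) (by omega), Vv_W (by omega) (by omega)]
        show (Pmat r 1).mulVec ![((avA r 1 : ℝ) : ℂ), ((avA r 0 : ℝ) : ℂ)]
            = ![((avA r 0 : ℝ) : ℂ), 0]
        rw [P_mulVec]
        funext i
        fin_cases i <;> simp
        have : rho r 1 * avA r 1 + gam r 1 * avA r 0 = avA r 0 := by
          linear_combination L1 hr 0
        exact_mod_cast congrArg (fun x : ℝ => (x : ℂ)) this
    | succ j =>
      rw [show Xi r (n + 1) (j + 1) = Pmat r (j + 2) * Xi r n (j + 2) + Qmat r j * Xi r n j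
          from rfl, Matrix.add_mulVec, ← Matrix.mulVec_mulVec, ← Matrix.mulVec_mulVec,
        ih (j + 2), ih j]
      rcases (by omega : n < j ∨ n = j ∨ n = j + 1 ∨ n = j + 2
          ∨ (j + 3 ≤ n ∧ (n + j) % 2 = 1) ∨ (j + 3 ≤ n ∧ (n + j) % 2 = 0))
        with h | h | h | h | ⟨h, hp⟩ | ⟨h, hp⟩
      · rw [Vv_lt (by omega), Vv_lt (by omega), Vv_lt (by omega),
          Matrix.mulVec_zero, Matrix.mulVec_zero, add_zero]
      · subst h
        rw [Vv_lt (by omega), Vv_diag rfl, Vv_diag (by omega),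
          Matrix.mulVec_zero, zero_add]
        cases n with
        | zero =>
          show (Qmat r 0).mulVec ![1, 0] = ![0, ((ppi r 0 : ℝ) : ℂ)]
          rw [Q0_mulVec, ppi_zero hr]
          norm_num
        | succ k =>
          show (Qmat r (k + 1)).mulVec ![0, ((ppi r k : ℝ) : ℂ)]
              = ![0, ((ppi r (k + 1) : ℝ) : ℂ)]
          rw [Qs_mulVec]
          funext i
          fin_cases i <;> simp
          exact_mod_cast congrArg (fun x : ℝ => (x : ℂ)) (L3 hr k)
      · rw [Vv_lt (by omega), Vv_odd (by omega), Vv_odd (by omega),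
          Matrix.mulVec_zero, Matrix.mulVec_zero, add_zero]
      · subst h
        rw [Vv_diag rfl, Vv_W (by omega) (by omega), Vv_W (by omega) (by omega)]
        cases j with
        | zero =>
          show (Pmat r 2).mulVec ![0, ((ppi r 1 : ℝ) : ℂ)]
              + (Qmat r 0).mulVec ![((avA r 0 : ℝ) : ℂ), 0]
              = ![((avA r 1 : ℝ) : ℂ), ((avA r 0 : ℝ) : ℂ)]
          rw [P_mulVec, Q0_mulVec]
          funext i
          fin_cases i <;> simp
          exact_mod_cast congrArg (fun x : ℝ => (x : ℂ)) (L4 hr 1)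
        | succ k =>
          show (Pmat r (k + 3)).mulVec ![0, ((ppi r (k + 2) : ℝ) : ℂ)]
              + (Qmat r (k + 1)).mulVec ![((avA r (k + 1) : ℝ) : ℂ), ((avA r k : ℝ) : ℂ)]
              = ![((avA r (k + 2) : ℝ) : ℂ), ((avA r (k + 1) : ℝ) : ℂ)]
          rw [P_mulVec, Qs_mulVec]
          funext i
          fin_cases i <;> simp
          · exact_mod_cast congrArg (fun x : ℝ => (x : ℂ)) (L4 hr (k + 2))
          · have : -(gam r (k + 1) * avA r (k + 1)) + rho r (k + 1) * avA r k
                = avA r (k + 1) := by linear_combination L2 hr k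
            exact_mod_cast congrArg (fun x : ℝ => (x : ℂ)) this
      · rw [Vv_odd (by omega), Vv_odd (by omega), Vv_odd (by omega),
          Matrix.mulVec_zero, Matrix.mulVec_zero, add_zero]
      · rw [Vv_W (by omega) (by omega), Vv_W (by omega) (by omega),
          Vv_W (by omega) (by omega)]
        cases j with
        | zero =>
          show (Pmat r 2).mulVec ![((avA r 2 : ℝ) : ℂ), ((avA r 1 : ℝ) : ℂ)]
              + (Qmat r 0).mulVec ![((avA r 0 : ℝ) : ℂ), 0]
              = ![((avA r 1 : ℝ) : ℂ), ((avA r 0 : ℝ) : ℂ)]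
          rw [P_mulVec, Q0_mulVec]
          funext i
          fin_cases i <;> simp
          have : rho r 2 * avA r 2 + gam r 2 * avA r 1 = avA r 1 := by
            linear_combination L1 hr 1
          exact_mod_cast congrArg (fun x : ℝ => (x : ℂ)) this
        | succ k =>
          show (Pmat r (k + 3)).mulVec ![((avA r (k + 3) : ℝ) : ℂ), ((avA r (k + 2) : ℝ) : ℂ)]
              + (Qmat r (k + 1)).mulVec ![((avA r (k + 1) : ℝ) : ℂ), ((avA r k : ℝ) : ℂ)]
              = ![((avA r (k + 2) : ℝ) : ℂ), ((avA r (k + 1) : ℝ) : ℂ)]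
          rw [P_mulVec, Qs_mulVec]
          funext i
          fin_cases i <;> simp
          · have : rho r (k + 3) * avA r (k + 3) + gam r (k + 3) * avA r (k + 2)
                = avA r (k + 2) := by linear_combination L1 hr (k + 2)
            exact_mod_cast congrArg (fun x : ℝ => (x : ℂ)) this
          · have : -(gam r (k + 1) * avA r (k + 1)) + rho r (k + 1) * avA r k
                = avA r (k + 1) := by linear_combination L2 hr k
            exact_mod_cast congrArg (fun x : ℝ => (x : ℂ)) this

end aux

/-- Localization with power-law decay around the origin for the second-kind walk:
`μ_n(j) = 0` when `n+j` is odd, and along the even-parity subsequence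
`μ_{j+2m}(j)` converges to `(1/(r+1))²` for `j = 0` and to
`2r/((r+1)(r−1+j)(r+1+j))` for `j ≥ 1`. -/
theorem localization_origin_second_kind (r : ℝ) (hr : 1 < r) :
    (∀ n j : ℕ, Odd (n + j) → mu r n j = 0) ∧
    Tendsto (fun m : ℕ => mu r (0 + 2 * m) 0) atTop (nhds ((1 / (r + 1)) ^ 2)) ∧
    ∀ j : ℕ, 1 ≤ j →
      Tendsto (fun m : ℕ => mu r (j + 2 * m) j) atTop
        (nhds (2 * r / ((r + 1) * (r - 1 + j) * (r + 1 + j)))) := by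
  have hmu : ∀ n j : ℕ,
      mu r n j = ‖Vv r n j 0‖ ^ 2 + ‖Vv r n j 1‖ ^ 2 := by
    intro n j
    simp only [mu, xi_eq hr]
  obtain ⟨h0, h1, -, -, -⟩ := facts hr 0
  refine ⟨?_, ?_, ?_⟩
  · intro n j hodd
    rw [hmu, Vv_odd (Nat.odd_iff.mp hodd)]
    simp
  · have key : ∀ m : ℕ, 1 ≤ m → mu r (0 + 2 * m) 0 = (1 / (r + 1)) ^ 2 := by
      intro m hm
      rw [hmu, Vv_W (by omega) (by omega)]
      simp only [Wv, Matrix.cons_val_zero, Matrix.cons_val_one, Matrix.head_cons,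
        norm_zero, Complex.norm_real, Real.norm_eq_abs, sq_abs]
      rw [avA_sq hr]
      push_cast
      rw [add_zero]
      norm_num
      field_simp
    refine Tendsto.congr' ?_ tendsto_const_nhds
    filter_upwards [eventually_ge_atTop 1] with m hm
    exact (key m hm).symm
  · intro j hj
    obtain ⟨k, rfl⟩ : ∃ k, j = k + 1 := ⟨j - 1, by omega⟩
    obtain ⟨f0, f1, f2, f3, f4⟩ := facts hr k
    have key : ∀ m : ℕ, 1 ≤ m → mu r (k + 1 + 2 * m) (k + 1)
        = 2 * r / ((r + 1) * (r - 1 + ((k + 1 : ℕ) : ℝ)) * (r + 1 + ((k + 1 : ℕ) : ℝ))) := by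
      intro m hm
      rw [hmu, Vv_W (by omega) (by omega)]
      simp only [Wv, Matrix.cons_val_zero, Matrix.cons_val_one, Matrix.head_cons,
        Complex.norm_real, Real.norm_eq_abs, sq_abs]
      rw [avA_sq hr, avA_sq hr]
      push_cast
      have e1 : r - 1 + ((k:ℝ) + 1) = r + k := by ring
      have e2 : r + 1 + ((k:ℝ) + 1) = r + k + 2 := by ring
      rw [e1, e2]
      field_simp
      ring
    refine Tendsto.congr' ?_ tendsto_const_nhds
    filter_upwards [eventually_ge_atTop 1] with m hm
    exact (key m hm).symm
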